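/- Let K = L²([0,1]) (with Lebesgue measure) and for s > 0 let R_s = {f ∈ L²([0,1]) : there exists g ∈ L²([0,1]) with f(x) = x^s g(x) for almost every x ∈ [0,1]}, i.e. R_s is the range of the multiplication operator M_{x^s}. Then for all positive real numbers s and t, R_s and R_t are unitarily equivalent: there exists a unitary operator (surjective linear isometry) U : L²([0,1]) → L²([0,1]) with U(R_s) = R_t. -/

import Mathlib

/- STATEMENT 14: For s > 0 let R_s ⊆ L²([0,1]) be the range of the multiplication
operator M_{x^s}, i.e. R_s = {f : ∃ g ∈ L², f(x) = x^s g(x) a.e.}. Then for all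
s, t > 0 the subspaces R_s and R_t are unitarily equivalent. -/

noncomputable section

open MeasureTheory

abbrev μ01 : Measure ℝ := volume.restrict (Set.Icc (0 : ℝ) 1)

abbrev L2 : Type := Lp ℂ 2 μ01

/-- The range R_s of the multiplication operator M_{x^s} on L²([0,1]). -/
def mulPowRange (s : ℝ) : Submodule ℂ L2 where
  carrier := {f | ∃ g : L2, ∀ᵐ x ∂μ01, (f : ℝ → ℂ) x = ((x ^ s : ℝ) : ℂ) * (g : ℝ → ℂ) x}
  zero_mem' := by
    refine ⟨0, ?_⟩
    filter_upwards [Lp.coeFn_zero ℂ 2 μ01] with x hx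
    rw [hx]
    simp
  add_mem' := by
    rintro f₁ f₂ ⟨g₁, hg₁⟩ ⟨g₂, hg₂⟩
    refine ⟨g₁ + g₂, ?_⟩
    filter_upwards [hg₁, hg₂, Lp.coeFn_add f₁ f₂, Lp.coeFn_add g₁ g₂] with x h1 h2 h3 h4
    simp only [h3, h4, Pi.add_apply, h1, h2]
    ring
  smul_mem' := by
    rintro c f ⟨g, hg⟩
    refine ⟨c • g, ?_⟩
    filter_upwards [hg, Lp.coeFn_smul c f, Lp.coeFn_smul c g] with x h1 h2 h3
    simp only [h2, h3, Pi.smul_apply, h1, smul_eq_mul]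
    ring


/-! ### Auxiliary machinery: the unitary `f(x) ↦ √(r x^(r-1)) f(x^r)` -/

section Aux
open Real Set
open scoped ENNReal NNReal

lemma img_Ioc {r : ℝ} (hr : 0 < r) : (fun x : ℝ => x ^ r) '' Set.Ioc 0 1 = Set.Ioc 0 1 := by
  ext y
  constructor
  · rintro ⟨x, ⟨hx0, hx1⟩, rfl⟩
    exact ⟨Real.rpow_pos_of_pos hx0 r, Real.rpow_le_one hx0.le hx1 hr.le⟩
  · rintro ⟨hy0, hy1⟩
    refine ⟨y ^ r⁻¹, ⟨Real.rpow_pos_of_pos hy0 _, Real.rpow_le_one hy0.le hy1 (by positivity)⟩, ?_⟩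
    exact Real.rpow_inv_rpow hy0.le hr.ne'

lemma cov {r : ℝ} (hr : 0 < r) (g : ℝ → ℝ≥0∞) :
    ∫⁻ x in Set.Icc (0:ℝ) 1, g x =
      ∫⁻ x in Set.Icc (0:ℝ) 1, ENNReal.ofReal (r * x ^ (r - 1)) * g (x ^ r) := by
  have inj : Set.InjOn (fun x : ℝ => x ^ r) (Set.Ioc 0 1) :=
    (Real.rpow_left_injOn hr.ne').mono (fun x hx => le_of_lt hx.1)
  have hder : ∀ x ∈ Set.Ioc (0:ℝ) 1,
      HasFDerivWithinAt (fun x : ℝ => x ^ r)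
        ((1 : ℝ →L[ℝ] ℝ).smulRight (r * x ^ (r - 1))) (Set.Ioc 0 1) x := fun x hx =>
    (Real.hasDerivAt_rpow_const (Or.inl hx.1.ne')).hasDerivWithinAt.hasFDerivWithinAt
  calc ∫⁻ x in Set.Icc (0:ℝ) 1, g x
      = ∫⁻ x in Set.Ioc (0:ℝ) 1, g x := setLIntegral_congr Ioc_ae_eq_Icc.symm
    _ = ∫⁻ x in (fun x : ℝ => x ^ r) '' Set.Ioc 0 1, g x := by rw [img_Ioc hr]
    _ = ∫⁻ x in Set.Ioc (0:ℝ) 1,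
          ENNReal.ofReal |((1 : ℝ →L[ℝ] ℝ).smulRight (r * x ^ (r - 1))).det| * g (x ^ r) :=
        lintegral_image_eq_lintegral_abs_det_fderiv_mul volume measurableSet_Ioc hder inj g
    _ = ∫⁻ x in Set.Ioc (0:ℝ) 1, ENNReal.ofReal (r * x ^ (r - 1)) * g (x ^ r) := by
        refine setLIntegral_congr_fun measurableSet_Ioc ?_
        intro x hx
        dsimp only
        rw [ContinuousLinearMap.smulRight_one_eq_toSpanSingleton, ContinuousLinearMap.det_toSpanSingleton, abs_of_pos (mul_pos hr (Real.rpow_pos_of_pos hx.1 _))]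
    _ = ∫⁻ x in Set.Icc (0:ℝ) 1, ENNReal.ofReal (r * x ^ (r - 1)) * g (x ^ r) :=
        setLIntegral_congr Ioc_ae_eq_Icc

lemma meas_rpow (c : ℝ) : Measurable fun x : ℝ => x ^ c := by
  have h : (fun x : ℝ => x ^ c) = fun x =>
      if x = 0 then (if c = 0 then 1 else 0)
      else if 0 < x then Real.exp (Real.log x * c)
      else Real.exp (Real.log x * c) * Real.cos (c * π) := by
    funext x
    rcases lt_trichotomy x 0 with h | h | h
    · rw [if_neg h.ne, if_neg (not_lt.mpr h.le), Real.rpow_def_of_neg h]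
    · subst h
      rw [if_pos rfl]
      rcases eq_or_ne c 0 with rfl | hc
      · simp
      · simp [Real.zero_rpow hc, hc]
    · rw [if_neg h.ne', if_pos h, Real.rpow_def_of_pos h]
  rw [h]
  refine Measurable.ite (MeasurableSet.singleton 0) measurable_const ?_
  refine Measurable.ite (measurableSet_lt measurable_const measurable_id) ?_ ?_
  · exact Real.measurable_exp.comp (Real.measurable_log.mul measurable_const)
  · exact (Real.measurable_exp.comp (Real.measurable_log.mul measurable_const)).mul
      measurable_const

lemma qmp {r : ℝ} (hr : 0 < r) :
    Measure.QuasiMeasurePreserving (fun x : ℝ => x ^ r) μ01 μ01 := by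
  refine ⟨meas_rpow r, Measure.AbsolutelyContinuous.mk fun A hA hA0 => ?_⟩
  rw [Measure.map_apply (meas_rpow r) hA,
    Measure.restrict_apply ((meas_rpow r) hA)]
  set F : ℝ → ℝ≥0∞ := fun x => ENNReal.ofReal (r * x ^ (r - 1)) * A.indicator 1 (x ^ r) with hF
  have hFmeas : Measurable F :=
    ((measurable_const.mul (meas_rpow (r - 1))).ennreal_ofReal).mul
      ((measurable_one.indicator hA).comp (meas_rpow r))
  have key : ∫⁻ x in Set.Ioc (0:ℝ) 1, F x = 0 := by
    rw [setLIntegral_congr Ioc_ae_eq_Icc, ← cov hr]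
    rw [lintegral_indicator hA]
    simp only [Pi.one_apply]
    rw [setLIntegral_one]
    rw [Measure.restrict_apply hA] at hA0 ⊢
    exact hA0
  have hFset : MeasurableSet {x : ℝ | F x ≠ 0} :=
    hFmeas (measurableSet_singleton 0).compl
  have hnull : volume ({x | F x ≠ 0} ∩ Set.Ioc 0 1) = 0 := by
    have h2 : (volume.restrict (Set.Ioc (0:ℝ) 1)) {x | F x ≠ 0} = 0 :=
      (lintegral_eq_zero_iff hFmeas).mp key
    rwa [Measure.restrict_apply hFset] at h2
  have hsub : (fun x : ℝ => x ^ r) ⁻¹' A ∩ Set.Icc 0 1 ⊆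
      ({x | F x ≠ 0} ∩ Set.Ioc 0 1) ∪ {0} := by
    rintro x ⟨hxA, hx0, hx1⟩
    rcases eq_or_lt_of_le hx0 with h | h
    · exact Or.inr (by simp [← h])
    · refine Or.inl ⟨?_, h, hx1⟩
      have hw : ENNReal.ofReal (r * x ^ (r - 1)) ≠ 0 := by
        simp only [ne_eq, ENNReal.ofReal_eq_zero, not_le]
        exact mul_pos hr (Real.rpow_pos_of_pos h _)
      have hind : A.indicator (1 : ℝ → ℝ≥0∞) (x ^ r) = 1 := Set.indicator_of_mem hxA 1
      simp only [Set.mem_setOf_eq, hF, hind, mul_one]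
      exact hw
  exact measure_mono_null hsub (measure_union_null hnull Real.volume_singleton)

/-- The weighted composition `f ↦ √(r x^(r-1)) f(x^r)`. -/
def Tfun (r : ℝ) (f : ℝ → ℂ) (x : ℝ) : ℂ :=
  (Real.sqrt (r * x ^ (r - 1)) : ℂ) * f (x ^ r)

lemma Tfun_congr {r : ℝ} (hr : 0 < r) {f g : ℝ → ℂ} (h : f =ᵐ[μ01] g) :
    Tfun r f =ᵐ[μ01] Tfun r g := by
  filter_upwards [(qmp hr).ae_eq h] with x hx
  simp only [Tfun, Function.comp] at hx ⊢
  rw [show f (x ^ r) = g (x ^ r) from hx]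

lemma Tfun_aesm {r : ℝ} (hr : 0 < r) {f : ℝ → ℂ} (hf : AEStronglyMeasurable f μ01) :
    AEStronglyMeasurable (Tfun r f) μ01 := by
  refine AEStronglyMeasurable.mul ?_ (hf.comp_quasiMeasurePreserving (qmp hr))
  exact (Complex.measurable_ofReal.comp
    ((measurable_const.mul (meas_rpow (r - 1))).sqrt)).aestronglyMeasurable

lemma Tfun_eLpNorm {r : ℝ} (hr : 0 < r) (f : ℝ → ℂ) :
    eLpNorm (Tfun r f) 2 μ01 = eLpNorm f 2 μ01 := by
  rw [eLpNorm_eq_lintegral_rpow_enorm_toReal (by norm_num) (by norm_num),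
    eLpNorm_eq_lintegral_rpow_enorm_toReal (by norm_num) (by norm_num)]
  simp only [enorm_eq_nnnorm]
  congr 1
  have htr : ((2 : ℝ≥0∞)).toReal = (2 : ℝ) := by norm_num
  rw [htr]
  have step : ∀ᵐ x ∂μ01, (‖Tfun r f x‖₊ : ℝ≥0∞) ^ (2:ℝ) =
      ENNReal.ofReal (r * x ^ (r - 1)) * (‖f (x ^ r)‖₊ : ℝ≥0∞) ^ (2:ℝ) := by
    filter_upwards [ae_restrict_mem measurableSet_Icc] with x hx
    have hx0 : (0:ℝ) ≤ x := hx.1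
    have hnn : (0:ℝ) ≤ r * x ^ (r - 1) := by positivity
    rw [Tfun, nnnorm_mul, ENNReal.coe_mul, ENNReal.mul_rpow_of_nonneg _ _ (by norm_num)]
    congr 1
    have hcoe : (‖((Real.sqrt (r * x ^ (r-1)) : ℝ) : ℂ)‖₊ : ℝ≥0∞)
        = ENNReal.ofReal (Real.sqrt (r * x ^ (r-1))) := by
      rw [Complex.nnnorm_real, ← Real.toNNReal_eq_nnnorm_of_nonneg (Real.sqrt_nonneg _)]
      rfl
    rw [hcoe]
    rw [ENNReal.ofReal_rpow_of_nonneg (Real.sqrt_nonneg _) (by norm_num),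
      show ((2:ℝ)) = ((2:ℕ):ℝ) by norm_num, Real.rpow_natCast, Real.sq_sqrt hnn]
  rw [lintegral_congr_ae step]
  exact (cov hr (fun x => (‖f x‖₊ : ℝ≥0∞) ^ (2:ℝ))).symm

lemma Tfun_memℒp {r : ℝ} (hr : 0 < r) (f : L2) : MemLp (Tfun r ⇑f) 2 μ01 :=
  ⟨Tfun_aesm hr (Lp.aestronglyMeasurable f), by
    rw [Tfun_eLpNorm hr]; exact (Lp.memLp f).2⟩

/-- The transform as a map on L². -/
def TL (r : ℝ) (hr : 0 < r) (f : L2) : L2 := (Tfun_memℒp hr f).toLp _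

lemma TL_coe (r : ℝ) (hr : 0 < r) (f : L2) : ⇑(TL r hr f) =ᵐ[μ01] Tfun r ⇑f :=
  MemLp.coeFn_toLp _

lemma ae_Ioc : ∀ᵐ x ∂μ01, x ∈ Set.Ioc (0:ℝ) 1 := by
  have h0 : μ01 ({0} : Set ℝ) = 0 :=
    le_antisymm ((Measure.restrict_apply_le _ _).trans (by simp)) zero_le
  filter_upwards [ae_restrict_mem measurableSet_Icc, compl_mem_ae_iff.mpr h0] with x hx hx0
  exact ⟨lt_of_le_of_ne hx.1 (Ne.symm hx0), hx.2⟩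

lemma Tfun_inv_comp {r : ℝ} (hr : 0 < r) (f : ℝ → ℂ) :
    Tfun r⁻¹ (Tfun r f) =ᵐ[μ01] f := by
  filter_upwards [ae_Ioc] with x hx
  have hxpos : 0 < x := hx.1
  simp only [Tfun]
  rw [Real.rpow_inv_rpow hxpos.le hr.ne']
  have ha : (0:ℝ) ≤ r⁻¹ * x ^ (r⁻¹ - 1) := by positivity
  have hab : (r⁻¹ * x ^ (r⁻¹ - 1)) * (r * (x ^ r⁻¹) ^ (r - 1)) = 1 := by
    rw [← Real.rpow_mul hxpos.le, mul_mul_mul_comm, inv_mul_cancel₀ hr.ne',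
      ← Real.rpow_add hxpos, show r⁻¹ - 1 + r⁻¹ * (r - 1) = 0 by field_simp; ring,
      Real.rpow_zero, one_mul]
  calc (↑(Real.sqrt (r⁻¹ * x ^ (r⁻¹ - 1))) : ℂ) *
        ((↑(Real.sqrt (r * (x ^ r⁻¹) ^ (r - 1))) : ℂ) * f x)
      = ((Real.sqrt (r⁻¹ * x ^ (r⁻¹ - 1)) * Real.sqrt (r * (x ^ r⁻¹) ^ (r - 1)) : ℝ) : ℂ)
          * f x := by push_cast; ring
    _ = ((Real.sqrt ((r⁻¹ * x ^ (r⁻¹ - 1)) * (r * (x ^ r⁻¹) ^ (r - 1))) : ℝ) : ℂ) * f x := by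
          rw [← Real.sqrt_mul ha]
    _ = f x := by rw [hab, Real.sqrt_one]; simp

lemma TL_inv_comp {r : ℝ} (hr : 0 < r) (f : L2) :
    TL r⁻¹ (inv_pos.mpr hr) (TL r hr f) = f := by
  apply Lp.ext
  calc ⇑(TL r⁻¹ (inv_pos.mpr hr) (TL r hr f))
      =ᵐ[μ01] Tfun r⁻¹ ⇑(TL r hr f) := TL_coe _ _ _
    _ =ᵐ[μ01] Tfun r⁻¹ (Tfun r ⇑f) := Tfun_congr (inv_pos.mpr hr) (TL_coe _ _ _)
    _ =ᵐ[μ01] ⇑f := Tfun_inv_comp hr ⇑f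

lemma TL_right_inv {r : ℝ} (hr : 0 < r) (f : L2) :
    TL r hr (TL r⁻¹ (inv_pos.mpr hr) f) = f := by
  have h := TL_inv_comp (inv_pos.mpr hr) f
  simpa only [inv_inv] using h

lemma TL_add {r : ℝ} (hr : 0 < r) (f g : L2) :
    TL r hr (f + g) = TL r hr f + TL r hr g := by
  apply Lp.ext
  have h1 : Tfun r ⇑(f + g) =ᵐ[μ01] Tfun r (⇑f + ⇑g) :=
    Tfun_congr hr (Lp.coeFn_add f g)
  filter_upwards [TL_coe r hr (f + g), TL_coe r hr f, TL_coe r hr g,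
    Lp.coeFn_add (TL r hr f) (TL r hr g), h1] with x hx1 hx2 hx3 hx4 hx5
  rw [hx1, hx5, hx4, Pi.add_apply, hx2, hx3]
  simp only [Tfun, Pi.add_apply]
  ring

lemma TL_smul {r : ℝ} (hr : 0 < r) (c : ℂ) (f : L2) :
    TL r hr (c • f) = c • TL r hr f := by
  apply Lp.ext
  have h1 : Tfun r ⇑(c • f) =ᵐ[μ01] Tfun r (c • ⇑f) :=
    Tfun_congr hr (Lp.coeFn_smul c f)
  filter_upwards [TL_coe r hr (c • f), TL_coe r hr f,
    Lp.coeFn_smul c (TL r hr f), h1] with x hx1 hx2 hx3 hx4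
  rw [hx1, hx4, hx3, Pi.smul_apply, hx2]
  simp only [Tfun, Pi.smul_apply, smul_eq_mul]
  ring

lemma TL_norm {r : ℝ} (hr : 0 < r) (f : L2) : ‖TL r hr f‖ = ‖f‖ := by
  rw [TL, Lp.norm_toLp, Tfun_eLpNorm hr, Lp.norm_def]

/-- The transform as a unitary (linear isometry equivalence). -/
def TLi (r : ℝ) (hr : 0 < r) : L2 ≃ₗᵢ[ℂ] L2 where
  toFun := TL r hr
  invFun := TL r⁻¹ (inv_pos.mpr hr)
  map_add' := TL_add hr
  map_smul' := TL_smul hr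
  left_inv := TL_inv_comp hr
  right_inv := TL_right_inv hr
  norm_map' := TL_norm hr

end Aux


section Aux2
open Real

lemma TL_mem {r a : ℝ} (hr : 0 < r) {f : L2} (hf : f ∈ mulPowRange a) :
    TL r hr f ∈ mulPowRange (a * r) := by
  obtain ⟨g, hg⟩ := hf
  refine ⟨TL r hr g, ?_⟩
  have h1 : Tfun r ⇑f =ᵐ[μ01] Tfun r (fun y => ((y ^ a : ℝ) : ℂ) * (g : ℝ → ℂ) y) :=
    Tfun_congr hr hg
  filter_upwards [TL_coe r hr f, TL_coe r hr g, h1,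
    ae_restrict_mem measurableSet_Icc] with x hx1 hx2 hx3 hx4
  rw [hx1, hx3, hx2]
  simp only [Tfun]
  rw [show ((x ^ r : ℝ)) ^ a = x ^ (a * r) by
    rw [mul_comm a r, Real.rpow_mul hx4.1]]
  ring

end Aux2

theorem ranges_of_multiplication_operators_unitarily_equivalent
    (s t : ℝ) (hs : 0 < s) (ht : 0 < t) :
    ∃ U : L2 ≃ₗᵢ[ℂ] L2, U '' ((mulPowRange s) : Set L2) = ((mulPowRange t) : Set L2) := by
  have hr : 0 < t / s := div_pos ht hs
  refine ⟨TLi (t / s) hr, Set.eq_of_subset_of_subset ?_ ?_⟩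
  · rintro y ⟨f, hf, rfl⟩
    show TL (t / s) hr f ∈ mulPowRange t
    have h := TL_mem hr (f := f) hf
    rwa [show s * (t / s) = t from by field_simp] at h
  · intro f hf
    have h2 := TL_mem (inv_pos.mpr hr) (f := f) hf
    rw [show t * (t / s)⁻¹ = s from by field_simp] at h2
    exact ⟨TL (t / s)⁻¹ (inv_pos.mpr hr) f, h2, TL_right_inv hr f⟩

end
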